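/- The class of degree sequences H_0 = {h_0(n) : n ∈ ℕ} is not P-stable: h_0(n) has exactly one realization, but h_0(n) − 𝟙_{a_1} − 𝟙_{b_n} has Θ(((1+√5)/2)^{2n}) realizations, which is superpolynomial in n. -/

import Mathlib

/-- Degree on the `A`-side of a bipartite graph on `Fin n × Fin n`. -/
def degA {n : ℕ} (E : Fin n → Fin n → Bool) (i : Fin n) : ℕ :=
  (Finset.univ.filter fun j => E i j = true).card

/-- Degree on the `B`-side. -/
def degB {n : ℕ} (E : Fin n → Fin n → Bool) (j : Fin n) : ℕ :=
  (Finset.univ.filter fun i => E i j = true).card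

/-- The number of bipartite realizations of the degree sequence `(dA; dB)`. -/
noncomputable def countReal (n : ℕ) (dA dB : Fin n → ℕ) : ℕ :=
  Set.ncard {E : Fin n → Fin n → Bool |
    (∀ i, degA E i = dA i) ∧ (∀ j, degB E j = dB j)}

/-- `A`-side of the half-graph degree sequence `h₀(n)` (0-indexed). -/
def h0dA (n : ℕ) : Fin n → ℕ := fun i => n - (i : ℕ)

/-- `B`-side of `h₀(n)` (0-indexed). -/
def h0dB (n : ℕ) : Fin n → ℕ := fun j => (j : ℕ) + 1

/-- `A`-side of `h₀(n) - 𝟙_{a₁} - 𝟙_{b_n}` (0-indexed). -/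
def h1dA (n : ℕ) : Fin n → ℕ := fun i => if (i : ℕ) = 0 then n - 1 else n - (i : ℕ)

/-- `B`-side of `h₀(n) - 𝟙_{a₁} - 𝟙_{b_n}` (0-indexed). -/
def h1dB (n : ℕ) : Fin n → ℕ := fun j => if (j : ℕ) = n - 1 then n - 1 else (j : ℕ) + 1

namespace NPS

open Finset

/-! ### Basic Fin counting -/

lemma card_le_filter {n : ℕ} (b : Fin n) :
    (univ.filter fun a : Fin n => (a : ℕ) ≤ (b : ℕ)).card = (b : ℕ) + 1 := by
  have : (univ.filter fun a : Fin n => (a : ℕ) ≤ (b : ℕ)) = Finset.Iic b := by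
    ext a; simp only [Finset.mem_filter, Finset.mem_Iic, Finset.mem_univ, true_and, Fin.le_def]
  rw [this, Fin.card_Iic]

lemma card_ge_filter {n : ℕ} (b : Fin n) :
    (univ.filter fun a : Fin n => (b : ℕ) ≤ (a : ℕ)).card = n - (b : ℕ) := by
  have : (univ.filter fun a : Fin n => (b : ℕ) ≤ (a : ℕ)) = Finset.Ici b := by
    ext a; simp only [Finset.mem_filter, Finset.mem_Ici, Finset.mem_univ, true_and, Fin.le_def]
  rw [this, Fin.card_Ici]

/-! ### Part 1: the half graph is the unique realization of h₀ -/

def halfE (n : ℕ) : Fin n → Fin n → Bool := fun i j => decide ((i : ℕ) ≤ (j : ℕ))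

lemma degA_halfE {n : ℕ} (i : Fin n) : degA (halfE n) i = n - (i : ℕ) := by
  simpa [degA, halfE] using card_ge_filter i

lemma degB_halfE {n : ℕ} (j : Fin n) : degB (halfE n) j = (j : ℕ) + 1 := by
  simpa [degB, halfE] using card_le_filter j

lemma h0_unique {n : ℕ} (E : Fin n → Fin n → Bool)
    (hA : ∀ i, degA E i = h0dA n i) (hB : ∀ j, degB E j = h0dB n j) :
    E = halfE n := by
  have key : ∀ k : ℕ, ∀ i : Fin n, (i : ℕ) = k → ∀ j, E i j = decide ((i : ℕ) ≤ (j : ℕ)) := by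
    intro k
    induction k using Nat.strong_induction_on with
    | _ k IH =>
      intro i hik
      have step1 : ∀ j : Fin n, (j : ℕ) < (i : ℕ) → E i j = false := by
        intro j hj
        have hS : (univ.filter fun a : Fin n => (a : ℕ) ≤ (j : ℕ)) ⊆
            (univ.filter fun a : Fin n => E a j = true) := by
          intro a ha
          simp only [mem_filter, mem_univ, true_and] at ha ⊢
          have haj : (a : ℕ) < k := hik ▸ lt_of_le_of_lt ha hj
          rw [IH (a : ℕ) haj a rfl j]
          simpa using ha
        have hST : (univ.filter fun a : Fin n => (a : ℕ) ≤ (j : ℕ)) =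
            (univ.filter fun a : Fin n => E a j = true) :=
          Finset.eq_of_subset_of_card_le hS (by rw [card_le_filter]; exact le_of_eq (hB j))
        by_contra hEij
        have hEt : E i j = true := by
          cases h : E i j
          · exact absurd h hEij
          · rfl
        have : i ∈ (univ.filter fun a : Fin n => (a : ℕ) ≤ (j : ℕ)) := by
          rw [hST]; simp [hEt]
        simp only [mem_filter, mem_univ, true_and] at this
        omega
      have step2 : (univ.filter fun b : Fin n => E i b = true) =
          (univ.filter fun b : Fin n => (i : ℕ) ≤ (b : ℕ)) := by
        refine Finset.eq_of_subset_of_card_le ?_ ?_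
        · intro b hb
          simp only [mem_filter, mem_univ, true_and] at hb ⊢
          by_contra hbi
          have := step1 b (by omega)
          rw [this] at hb; exact absurd hb (by simp)
        · rw [card_ge_filter]; exact le_of_eq (hA i).symm
      intro j
      by_cases hij : (i : ℕ) ≤ (j : ℕ)
      · have : j ∈ (univ.filter fun b : Fin n => E i b = true) := by
          rw [step2, mem_filter]; exact ⟨mem_univ j, hij⟩
        simp only [mem_filter, mem_univ, true_and] at this
        rw [this]; simp [hij]
      · rw [step1 j (by omega)]; simp [hij]
  funext i j
  exact key (i : ℕ) i rfl j

lemma part1 (n : ℕ) : countReal n (h0dA n) (h0dB n) = 1 := by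
  have hset : {E : Fin n → Fin n → Bool |
      (∀ i, degA E i = h0dA n i) ∧ (∀ j, degB E j = h0dB n j)} = {halfE n} := by
    ext E
    simp only [Set.mem_setOf_eq, Set.mem_singleton_iff]
    constructor
    · rintro ⟨hA, hB⟩; exact h0_unique E hA hB
    · rintro rfl
      exact ⟨fun i => degA_halfE i, fun j => degB_halfE j⟩
  rw [countReal, hset, Set.ncard_singleton]

/-! ### Chains and their cells -/

def cells : List ℕ → List (ℕ × ℕ)
  | [] => []
  | [m] => [(0, m)]
  | m :: i :: l => (i, m) :: (i, l.headI) :: cells l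

def chF (m : ℕ) : Finset (List ℕ) :=
  insert [m] <|
    (Finset.range m).attach.biUnion fun j =>
      have : j.1 < m := Finset.mem_range.mp j.2
      (chF j.1).biUnion fun l => (Finset.Icc (j.1 + 1) m).image fun i => m :: i :: l
  termination_by m

lemma mem_chF {m : ℕ} {l : List ℕ} :
    l ∈ chF m ↔ l = [m] ∨
      ∃ j i l', j < i ∧ i ≤ m ∧ l' ∈ chF j ∧ l = m :: i :: l' := by
  rw [chF]
  simp only [Finset.mem_insert, Finset.mem_biUnion, Finset.mem_attach, true_and,
    Finset.mem_image, Finset.mem_Icc, Subtype.exists, Finset.mem_range]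
  constructor
  · rintro (h | ⟨j, hj, l', hl', i, ⟨hji, him⟩, rfl⟩)
    · exact Or.inl h
    · exact Or.inr ⟨j, i, l', hji, him, hl', rfl⟩
  · rintro (h | ⟨j, i, l', hji, him, hl', rfl⟩)
    · exact Or.inl h
    · exact Or.inr ⟨j, by omega, l', hl', i, ⟨hji, him⟩, rfl⟩

/-- Structural facts about chains. -/
structure Good (m : ℕ) (l : List ℕ) : Prop where
  head : ∃ t, l = m :: t
  col_head : ∃ r, r ≤ m ∧ ∀ r', ((r', m) ∈ cells l ↔ r' = r)
  col_lt : ∀ c, c < m → (∀ r', (r', c) ∉ cells l) ∨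
      ∃ r₁ r₂, r₁ ≤ c ∧ c < r₂ ∧ r₂ ≤ m ∧
        ∀ r', ((r', c) ∈ cells l ↔ (r' = r₁ ∨ r' = r₂))
  col_gt : ∀ c, m < c → ∀ r', (r', c) ∉ cells l
  row_zero : ∃ d, d ≤ m ∧ ∀ c', ((0, c') ∈ cells l ↔ c' = d)
  row_pos : ∀ r, 0 < r → (∀ c', (r, c') ∉ cells l) ∨
      ∃ c d, c < r ∧ r ≤ d ∧ d ≤ m ∧
        ∀ c', ((r, c') ∈ cells l ↔ (c' = c ∨ c' = d))
  bound : ∀ p ∈ cells l, (p.1 = 0 ∨ p.1 ∈ l.tail) ∧ p.1 ≤ m ∧ p.2 ≤ m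

lemma good_of_chF : ∀ m l, l ∈ chF m → Good m l := by
  intro m
  induction m using Nat.strong_induction_on with
  | _ m IH =>
    intro l hl
    rcases mem_chF.mp hl with rfl | ⟨j0, i, l', hji, him, hl', rfl⟩
    · refine ⟨⟨[], rfl⟩, ⟨0, Nat.zero_le m, ?_⟩, ?_, ?_, ⟨m, le_refl m, ?_⟩, ?_, ?_⟩
      · intro r'; simp [cells]
      · intro c hc; left; intro r'; simp [cells]; omega
      · intro c hc r'; simp [cells]; omega
      · intro c'; simp [cells]
      · intro r hr; left; intro c'; simp [cells]; omega
      · intro p hp; simp [cells] at hp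
        rw [hp]; exact ⟨Or.inl rfl, Nat.zero_le m, le_refl m⟩
    · have G' := IH j0 (by omega) l' hl'
      obtain ⟨t', ht'⟩ := G'.head
      have hhead : l'.headI = j0 := by rw [ht']; rfl
      have hcells : cells (m :: i :: l') = (i, m) :: (i, j0) :: cells l' := by
        show (i, m) :: (i, l'.headI) :: cells l' = _
        rw [hhead]
      have hb' : ∀ p ∈ cells l', p.1 ≤ j0 ∧ p.2 ≤ j0 := by
        intro p hp; exact ⟨(G'.bound p hp).2.1, (G'.bound p hp).2.2⟩
      have hjm : j0 < m := by omega
      have hi1 : 1 ≤ i := by omega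
      refine ⟨⟨i :: l', rfl⟩, ⟨i, him, ?_⟩, ?_, ?_, ?_, ?_, ?_⟩
      · intro r'
        simp only [hcells, List.mem_cons, Prod.mk.injEq]
        constructor
        · rintro (⟨h1, h2⟩ | ⟨h1, h2⟩ | h)
          · exact h1
          · omega
          · exact absurd ((hb' _ h).2) (by omega)
        · rintro rfl; exact Or.inl ⟨rfl, trivial⟩
      · intro c hc
        by_cases hcj : c = j0
        · subst hcj
          obtain ⟨r, hr, hiff⟩ := G'.col_head
          right
          refine ⟨r, i, by omega, hji, him, ?_⟩
          intro r'
          simp only [hcells, List.mem_cons, Prod.mk.injEq]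
          constructor
          · rintro (⟨h1, h2⟩ | ⟨h1, h2⟩ | h)
            · omega
            · exact Or.inr h1
            · exact Or.inl ((hiff r').mp h)
          · rintro (h | h)
            · exact Or.inr (Or.inr ((hiff r').mpr h))
            · exact Or.inr (Or.inl ⟨h, trivial⟩)
        · by_cases hcj' : c < j0
          · rcases G'.col_lt c hcj' with hnone | ⟨r₁, r₂, h1, h2, h3, hiff⟩
            · left; intro r'
              simp only [hcells, List.mem_cons, Prod.mk.injEq]
              push_neg
              exact ⟨fun h => by omega, fun h => by omega, hnone r'⟩
            · right
              refine ⟨r₁, r₂, h1, h2, by omega, ?_⟩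
              intro r'
              simp only [hcells, List.mem_cons, Prod.mk.injEq]
              constructor
              · rintro (⟨ha, hb⟩ | ⟨ha, hb⟩ | h)
                · omega
                · omega
                · exact (hiff r').mp h
              · intro h
                exact Or.inr (Or.inr ((hiff r').mpr h))
          · left; intro r'
            simp only [hcells, List.mem_cons, Prod.mk.injEq]
            push_neg
            refine ⟨fun h => by omega, fun h => by omega, fun h => ?_⟩
            exact absurd ((hb' _ h).2) (by omega)
      · intro c hc r'
        simp only [hcells, List.mem_cons, Prod.mk.injEq]
        push_neg
        refine ⟨fun h => by omega, fun h => by omega, fun h => ?_⟩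
        exact absurd ((hb' _ h).2) (by omega)
      · obtain ⟨d, hd, hiff⟩ := G'.row_zero
        refine ⟨d, by omega, ?_⟩
        intro c'
        simp only [hcells, List.mem_cons, Prod.mk.injEq]
        constructor
        · rintro (⟨h1, h2⟩ | ⟨h1, h2⟩ | h)
          · omega
          · omega
          · exact (hiff c').mp h
        · intro h; exact Or.inr (Or.inr ((hiff c').mpr h))
      · intro r hr
        by_cases hri : r = i
        · subst hri
          right
          refine ⟨j0, m, hji, him, le_refl m, ?_⟩
          intro c'
          simp only [hcells, List.mem_cons, Prod.mk.injEq]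
          constructor
          · rintro (⟨h1, h2⟩ | ⟨h1, h2⟩ | h)
            · exact Or.inr h2
            · exact Or.inl h2
            · exact absurd ((hb' _ h).1) (by omega)
          · rintro (h | h)
            · exact Or.inr (Or.inl ⟨trivial, h⟩)
            · exact Or.inl ⟨trivial, h⟩
        · rcases G'.row_pos r hr with hnone | ⟨c, d, h1, h2, h3, hiff⟩
          · left; intro c'
            simp only [hcells, List.mem_cons, Prod.mk.injEq]
            push_neg
            exact ⟨fun h => absurd h hri, fun h => absurd h hri, hnone c'⟩
          · right
            refine ⟨c, d, h1, h2, by omega, ?_⟩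
            intro c'
            simp only [hcells, List.mem_cons, Prod.mk.injEq]
            constructor
            · rintro (⟨ha, hb⟩ | ⟨ha, hb⟩ | h)
              · exact absurd ha hri
              · exact absurd ha hri
              · exact (hiff c').mp h
            · intro h; exact Or.inr (Or.inr ((hiff c').mpr h))
      · intro p hp
        rw [hcells] at hp
        rcases List.mem_cons.mp hp with rfl | hp'
        · exact ⟨Or.inr (List.mem_cons_self), him, le_refl m⟩
        · rcases List.mem_cons.mp hp' with rfl | hp''
          · exact ⟨Or.inr (List.mem_cons_self), him, by omega⟩
          · obtain ⟨hrow, hb1, hb2⟩ := G'.bound p hp''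
            refine ⟨?_, by omega, by omega⟩
            rcases hrow with h0 | ht
            · exact Or.inl h0
            · exact Or.inr (List.mem_cons_of_mem _ (List.mem_of_mem_tail ht))

/-! ### The matrix of a chain and its degrees -/

def EOf (n : ℕ) (l : List ℕ) : Fin n → Fin n → Bool :=
  fun i j => (decide ((i : ℕ) ≤ (j : ℕ))).xor (decide (((i : ℕ), (j : ℕ)) ∈ cells l))

lemma EOf_true {n : ℕ} (l : List ℕ) (a b : Fin n) :
    (EOf n l a b = true) ↔ ¬(((a : ℕ) ≤ (b : ℕ)) ↔ (((a : ℕ), (b : ℕ)) ∈ cells l)) := by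
  by_cases h1 : (a : ℕ) ≤ (b : ℕ) <;> by_cases h2 : ((a : ℕ), (b : ℕ)) ∈ cells l <;>
    simp [EOf, h1, h2]

lemma degA_EOf {n m : ℕ} {l : List ℕ} (hl : l ∈ chF m) (hm : m < n) (i : Fin n) :
    degA (EOf n l) i = if (i : ℕ) = 0 then n - 1 else n - (i : ℕ) := by
  have G := good_of_chF m l hl
  by_cases hi0 : (i : ℕ) = 0
  · obtain ⟨d, hd, hiff⟩ := G.row_zero
    have hdn : d < n := by omega
    have hset : (univ.filter fun b : Fin n => EOf n l i b = true) =
        univ.erase ⟨d, hdn⟩ := by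
      ext b
      simp only [mem_filter, mem_univ, true_and, mem_erase, EOf_true, Fin.ext_iff]
      have hcell : (((i : ℕ), (b : ℕ)) ∈ cells l) ↔ (b : ℕ) = d := by
        rw [hi0]; exact hiff _
      rw [hcell]
      have : (i : ℕ) ≤ (b : ℕ) := by omega
      by_cases hbd : (b : ℕ) = d <;> simp [hbd, this, Fin.ext_iff] <;> omega
    rw [degA, hset, card_erase_of_mem (mem_univ _), card_univ, Fintype.card_fin,
      if_pos hi0]
  · have hi0' : 0 < (i : ℕ) := by omega
    rw [degA, if_neg hi0]
    rcases G.row_pos (i : ℕ) hi0' with hnone | ⟨c, d, hc, hd, hdm, hiff⟩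
    · have hset : (univ.filter fun b : Fin n => EOf n l i b = true) =
          (univ.filter fun b : Fin n => (i : ℕ) ≤ (b : ℕ)) := by
        ext b
        simp only [mem_filter, mem_univ, true_and, EOf_true]
        simp [hnone (b : ℕ)]
      rw [hset, card_ge_filter]
    · have hdn : d < n := by omega
      have hcn : c < n := by omega
      have hset : (univ.filter fun b : Fin n => EOf n l i b = true) =
          insert ⟨c, hcn⟩ ((univ.filter fun b : Fin n => (i : ℕ) ≤ (b : ℕ)).erase ⟨d, hdn⟩) := by
        ext b
        simp only [mem_filter, mem_univ, true_and, mem_erase, mem_insert, EOf_true,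
          Fin.ext_iff]
        rw [hiff (b : ℕ)]
        by_cases h1 : (b : ℕ) = c <;> by_cases h2 : (b : ℕ) = d <;>
          by_cases h3 : (i : ℕ) ≤ (b : ℕ) <;> simp [h1, h2, h3, Fin.ext_iff] <;> omega
      rw [hset, card_insert_of_notMem, card_erase_of_mem, card_ge_filter]
      · omega
      · simp only [mem_filter, mem_univ, true_and]; exact hd
      · simp only [mem_erase, mem_filter, mem_univ, true_and, Fin.ext_iff, not_and]
        intro _; omega

lemma degB_EOf {n m : ℕ} {l : List ℕ} (hl : l ∈ chF m) (hm : m < n) (j : Fin n) :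
    degB (EOf n l) j = if (j : ℕ) = m then m else (j : ℕ) + 1 := by
  have G := good_of_chF m l hl
  by_cases hjm : (j : ℕ) = m
  · obtain ⟨r, hr, hiff⟩ := G.col_head
    have hrn : r < n := by omega
    have hset : (univ.filter fun a : Fin n => EOf n l a j = true) =
        (univ.filter fun a : Fin n => (a : ℕ) ≤ (j : ℕ)).erase ⟨r, hrn⟩ := by
      ext a
      simp only [mem_filter, mem_univ, true_and, mem_erase, EOf_true, Fin.ext_iff]
      have hcell : (((a : ℕ), (j : ℕ)) ∈ cells l) ↔ (a : ℕ) = r := by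
        rw [hjm]; exact hiff _
      rw [hcell]
      by_cases h1 : (a : ℕ) = r <;> by_cases h2 : (a : ℕ) ≤ (j : ℕ) <;>
        simp [h1, h2, Fin.ext_iff] <;> omega
    rw [degB, hset, card_erase_of_mem, card_le_filter, if_pos hjm]
    · omega
    · simp only [mem_filter, mem_univ, true_and]; omega
  · rw [degB, if_neg hjm]
    have hnocells : (∀ r', (r', (j : ℕ)) ∉ cells l) →
        (univ.filter fun a : Fin n => EOf n l a j = true) =
          (univ.filter fun a : Fin n => (a : ℕ) ≤ (j : ℕ)) := by
      intro hnone
      ext a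
      simp only [mem_filter, mem_univ, true_and, EOf_true]
      simp [hnone (a : ℕ)]
    by_cases hjm' : (j : ℕ) < m
    · rcases G.col_lt (j : ℕ) hjm' with hnone | ⟨r₁, r₂, h1, h2, h3, hiff⟩
      · rw [hnocells hnone, card_le_filter]
      · have hr1n : r₁ < n := by omega
        have hr2n : r₂ < n := by omega
        have hset : (univ.filter fun a : Fin n => EOf n l a j = true) =
            insert ⟨r₂, hr2n⟩
              ((univ.filter fun a : Fin n => (a : ℕ) ≤ (j : ℕ)).erase ⟨r₁, hr1n⟩) := by
          ext a
          simp only [mem_filter, mem_univ, true_and, mem_erase, mem_insert, EOf_true,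
            Fin.ext_iff]
          rw [hiff (a : ℕ)]
          by_cases e1 : (a : ℕ) = r₁ <;> by_cases e2 : (a : ℕ) = r₂ <;>
            by_cases e3 : (a : ℕ) ≤ (j : ℕ) <;> simp [e1, e2, e3, Fin.ext_iff] <;> omega
        rw [hset, card_insert_of_notMem, card_erase_of_mem, card_le_filter]
        · omega
        · simp only [mem_filter, mem_univ, true_and]; omega
        · simp only [mem_erase, mem_filter, mem_univ, true_and, Fin.ext_iff, not_and]
          intro _; omega
    · have : m < (j : ℕ) := by omega
      rw [hnocells (G.col_gt (j : ℕ) this), card_le_filter]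

lemma cells_cons (m i : ℕ) (l : List ℕ) :
    cells (m :: i :: l) = (i, m) :: (i, l.headI) :: cells l := rfl

lemma cells_inj : ∀ m₁ l₁, l₁ ∈ chF m₁ → ∀ m₂ l₂, l₂ ∈ chF m₂ →
    (∀ p, p ∈ cells l₁ ↔ p ∈ cells l₂) → l₁ = l₂ := by
  intro m₁
  induction m₁ using Nat.strong_induction_on with
  | _ m₁ IH =>
    intro l₁ h₁ m₂ l₂ h₂ hpp
    have G₁ := good_of_chF _ _ h₁
    have G₂ := good_of_chF _ _ h₂
    obtain ⟨r₁, hr₁, hiff₁⟩ := G₁.col_head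
    obtain ⟨r₂, hr₂, hiff₂⟩ := G₂.col_head
    have hm1 : (r₁, m₁) ∈ cells l₂ := (hpp _).mp ((hiff₁ r₁).mpr rfl)
    have hm2 : (r₂, m₂) ∈ cells l₁ := (hpp _).mpr ((hiff₂ r₂).mpr rfl)
    have b1 := (G₂.bound _ hm1).2.2
    have b2 := (G₁.bound _ hm2).2.2
    have hm12 : m₁ = m₂ := le_antisymm b1 b2
    subst hm12
    have hrr : r₁ = r₂ := (hiff₂ r₁).mp hm1
    rcases mem_chF.mp h₁ with rfl | ⟨j₁, i₁, l₁', hj₁, hi₁, hl₁', rfl⟩ <;>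
      rcases mem_chF.mp h₂ with rfl | ⟨j₂, i₂, l₂', hj₂, hi₂, hl₂', rfl⟩
    · rfl
    · exfalso
      have e1 : 0 = r₁ := (hiff₁ 0).mp (by simp [cells])
      have e2 : i₂ = r₂ := (hiff₂ i₂).mp (by
        rw [cells_cons]; exact List.mem_cons_self)
      omega
    · exfalso
      have e1 : i₁ = r₁ := (hiff₁ i₁).mp (by
        rw [cells_cons]; exact List.mem_cons_self)
      have e2 : 0 = r₂ := (hiff₂ 0).mp (by simp [cells])
      omega
    · have e1 : i₁ = r₁ := (hiff₁ i₁).mp (by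
        rw [cells_cons]; exact List.mem_cons_self)
      have e2 : i₂ = r₂ := (hiff₂ i₂).mp (by
        rw [cells_cons]; exact List.mem_cons_self)
      have hii : i₁ = i₂ := by omega
      subst hii
      obtain ⟨t₁, ht₁⟩ := (good_of_chF _ _ hl₁').head
      obtain ⟨t₂, ht₂⟩ := (good_of_chF _ _ hl₂').head
      have hhead₁ : l₁'.headI = j₁ := by rw [ht₁]; rfl
      have hhead₂ : l₂'.headI = j₂ := by rw [ht₂]; rfl
      have hb₁ : ∀ p ∈ cells l₁', p.1 ≤ j₁ ∧ p.2 ≤ j₁ := fun p hp =>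
        ⟨((good_of_chF _ _ hl₁').bound p hp).2.1, ((good_of_chF _ _ hl₁').bound p hp).2.2⟩
      have hb₂ : ∀ p ∈ cells l₂', p.1 ≤ j₂ ∧ p.2 ≤ j₂ := fun p hp =>
        ⟨((good_of_chF _ _ hl₂').bound p hp).2.1, ((good_of_chF _ _ hl₂').bound p hp).2.2⟩
      have hjj : j₁ = j₂ := by
        have hmem : (i₁, j₁) ∈ cells (m₁ :: i₁ :: l₂') := by
          rw [← (hpp (i₁, j₁))]
          rw [cells_cons, hhead₁]
          exact List.mem_cons_of_mem _ (List.mem_cons_self)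
        rw [cells_cons, hhead₂] at hmem
        rcases List.mem_cons.mp hmem with he | hmem'
        · exfalso; have := (Prod.mk.injEq _ _ _ _).mp he; omega
        · rcases List.mem_cons.mp hmem' with he | hmem''
          · exact ((Prod.mk.injEq _ _ _ _).mp he).2
          · exfalso; have := (hb₂ _ hmem'').1; omega
      subst hjj
      have hsub : ∀ p, p ∈ cells l₁' ↔ p ∈ cells l₂' := by
        intro p
        constructor
        · intro hp
          have hple := hb₁ p hp
          have : p ∈ cells (m₁ :: i₁ :: l₂') := by
            rw [← hpp p, cells_cons, hhead₁]
            exact List.mem_cons_of_mem _ (List.mem_cons_of_mem _ hp)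
          rw [cells_cons, hhead₂] at this
          rcases List.mem_cons.mp this with he | this'
          · exfalso; subst he; simp at hple; omega
          · rcases List.mem_cons.mp this' with he | h''
            · exfalso; subst he; simp at hple; omega
            · exact h''
        · intro hp
          have hple := hb₂ p hp
          have : p ∈ cells (m₁ :: i₁ :: l₁') := by
            rw [hpp p, cells_cons, hhead₂]
            exact List.mem_cons_of_mem _ (List.mem_cons_of_mem _ hp)
          rw [cells_cons, hhead₁] at this
          rcases List.mem_cons.mp this with he | this'
          · exfalso; subst he; simp at hple; omega
          · rcases List.mem_cons.mp this' with he | h''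
            · exfalso; subst he; simp at hple; omega
            · exact h''
      have : l₁' = l₂' := IH j₁ (by omega) l₁' hl₁' j₁ l₂' hl₂' hsub
      rw [this]

lemma EOf_inj {n : ℕ} {m₁ m₂ : ℕ} {l₁ l₂ : List ℕ} (h₁ : l₁ ∈ chF m₁)
    (h₂ : l₂ ∈ chF m₂) (hm₁ : m₁ < n) (hm₂ : m₂ < n)
    (h : EOf n l₁ = EOf n l₂) : l₁ = l₂ := by
  have G₁ := good_of_chF _ _ h₁
  have G₂ := good_of_chF _ _ h₂
  apply cells_inj m₁ l₁ h₁ m₂ l₂ h₂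
  have key : ∀ p : ℕ × ℕ, p.1 < n → p.2 < n → (p ∈ cells l₁ ↔ p ∈ cells l₂) := by
    intro p hp1 hp2
    have hfun := congrFun (congrFun h ⟨p.1, hp1⟩) ⟨p.2, hp2⟩
    simp only [EOf, Fin.val_mk, Prod.mk.eta] at hfun
    by_cases hle : p.1 ≤ p.2 <;> by_cases hA : p ∈ cells l₁ <;>
      by_cases hB : p ∈ cells l₂ <;>
      simp [hle, hA, hB] at hfun ⊢
  intro p
  constructor
  · intro hp
    have hb := G₁.bound p hp
    exact (key p (by omega) (by omega)).mp hp
  · intro hp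
    have hb := G₂.bound p hp
    exact (key p (by omega) (by omega)).mpr hp

/-! ### Surjectivity: every realization of h₁ comes from a chain -/

lemma surj {n : ℕ} (hn : 1 ≤ n) (E : Fin n → Fin n → Bool)
    (hA : ∀ i, degA E i = h1dA n i) (hB : ∀ j, degB E j = h1dB n j) :
    ∃ l ∈ chF (n - 1), E = EOf n l := by
  classical
  have hInv : ∀ i, 1 ≤ i → i ≤ n →
      ∃ c l, c ≤ n - 1 ∧ l ∈ chF c ∧ (∀ t ∈ l.tail, t < i) ∧
        ∀ a : Fin n, (a : ℕ) < i → ∀ b : Fin n, E a b = EOf n l a b := by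
    intro i
    induction i with
    | zero => omega
    | succ k IH =>
      intro h1 h2
      rcases Nat.eq_or_lt_of_le h1 with hk1 | hk2
      · -- base case : k = 0, analyze row 0
        have hk0 : k = 0 := by omega
        subst hk0
        have hz : 0 < n := by omega
        set z : Fin n := ⟨0, hz⟩ with hzdef
        have hdegz : (univ.filter fun b : Fin n => E z b = true).card = n - 1 := by
          have := hA z
          simp only [h1dA, hzdef] at this
          exact this
        have hcompl : (univ.filter fun b : Fin n => ¬(E z b = true)).card = 1 := by
          have htot := Finset.card_filter_add_card_filter_not
            (s := (univ : Finset (Fin n))) (p := fun b : Fin n => E z b = true)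
          rw [card_univ, Fintype.card_fin] at htot
          omega
        obtain ⟨d, hd⟩ := Finset.card_eq_one.mp hcompl
        have hdmem : ∀ b : Fin n, E z b = false ↔ b = d := by
          intro b
          constructor
          · intro hb
            have : b ∈ univ.filter fun b : Fin n => ¬(E z b = true) := by
              simp [hb]
            rw [hd] at this; simpa using this
          · intro hb
            have : d ∈ univ.filter fun b : Fin n => ¬(E z b = true) := by
              rw [hd]; simp
            simp only [mem_filter, mem_univ, true_and, Bool.not_eq_true] at this
            rw [hb]; exact this
        refine ⟨(d : ℕ), [(d : ℕ)], by omega, mem_chF.mpr (Or.inl rfl), by simp, ?_⟩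
        intro a ha b
        have haz : a = z := by
          apply Fin.ext; simpa using (by omega : (a : ℕ) = 0)
        subst haz
        have hzval : ((z : ℕ)) = 0 := rfl
        have hcell : (((z : ℕ), (b : ℕ)) ∈ cells [(d : ℕ)]) ↔ b = d := by
          simp [cells, hzval, Fin.ext_iff]
        by_cases hbd : b = d
        · have hEf : E z b = false := (hdmem b).mpr hbd
          rw [hEf, EOf]
          have hle : (z : ℕ) ≤ (b : ℕ) := by omega
          simp [hcell, hbd, hle, cells]
          exact ⟨fun _ => hzval, fun _ => Fin.le_def.mpr (by omega)⟩
        · have hEt : E z b = true := by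
            cases hEab : E z b
            · exact absurd ((hdmem b).mp hEab) hbd
            · rfl
          rw [hEt, EOf]
          have hle : (z : ℕ) ≤ (b : ℕ) := by omega
          simp [hcell, hbd, hle, cells]
          exact Or.inr (fun h => hbd (Fin.ext h))
      · -- inductive step : 1 ≤ k, k < n ; analyze row k
        have hk : 1 ≤ k := by omega
        have hkn : k < n := by omega
        obtain ⟨c, l, hc, hl, htail, hagr⟩ := IH hk (by omega)
        have G := good_of_chF c l hl
        have hcn : c < n := by omega
        have hrows : ∀ p ∈ cells l, p.1 < k := by
          intro p hp
          rcases (G.bound p hp).1 with h0 | ht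
          · omega
          · exact htail _ ht
        set ik : Fin n := ⟨k, hkn⟩ with hikdef
        have hdegrow : (univ.filter fun b : Fin n => E ik b = true).card = n - k := by
          have := hA ik
          simp only [h1dA, hikdef] at this
          rw [if_neg (by omega)] at this
          exact this
        have hEOflow : ∀ b : Fin n, (b : ℕ) < k → ∀ a : Fin n, k ≤ (a : ℕ) →
            EOf n l a b = false := by
          intro b hb a ha
          rw [EOf]
          have h1' : ¬((a : ℕ) ≤ (b : ℕ)) := by omega
          have h2' : ((a : ℕ), (b : ℕ)) ∉ cells l := by
            intro hmem
            have := hrows _ hmem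
            simp at this; omega
          simp [h1', h2']
        have claim1 : ∀ b : Fin n, (b : ℕ) < k → (b : ℕ) ≠ c → ∀ a : Fin n,
            k ≤ (a : ℕ) → E a b = false := by
          intro b hb hbc a ha
          have hdegb : (univ.filter fun a : Fin n => E a b = true).card = (b : ℕ) + 1 := by
            have := hB b
            simp only [h1dB] at this
            rw [if_neg (by omega)] at this
            exact this
          have hsplit : (univ.filter fun a : Fin n => E a b = true) =
              (univ.filter fun a : Fin n => (a : ℕ) < k ∧ E a b = true) ∪
              (univ.filter fun a : Fin n => k ≤ (a : ℕ) ∧ E a b = true) := by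
            ext x
            simp only [mem_filter, mem_univ, true_and, mem_union]
            constructor
            · intro hx
              by_cases hxk : (x : ℕ) < k
              · exact Or.inl ⟨hxk, hx⟩
              · exact Or.inr ⟨by omega, hx⟩
            · rintro (⟨_, hx⟩ | ⟨_, hx⟩) <;> exact hx
          have hdisj : Disjoint
              (univ.filter fun a : Fin n => (a : ℕ) < k ∧ E a b = true)
              (univ.filter fun a : Fin n => k ≤ (a : ℕ) ∧ E a b = true) := by
            rw [Finset.disjoint_filter]
            rintro x _ ⟨hx, _⟩ ⟨hx', _⟩
            omega
          have hlow : (univ.filter fun a : Fin n => (a : ℕ) < k ∧ E a b = true) =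
              (univ.filter fun a : Fin n => EOf n l a b = true) := by
            ext x
            simp only [mem_filter, mem_univ, true_and]
            constructor
            · rintro ⟨hx, hx'⟩
              rw [← hagr x hx b]; exact hx'
            · intro hx
              have hxk : (x : ℕ) < k := by
                by_contra hxk
                rw [hEOflow b hb x (by omega)] at hx
                exact absurd hx (by simp)
              exact ⟨hxk, by rw [hagr x hxk b]; exact hx⟩
          have hlowcard : (univ.filter fun a : Fin n => EOf n l a b = true).card
              = (b : ℕ) + 1 := by
            have := degB_EOf hl hcn b
            rw [if_neg hbc] at this
            exact this
          have hcards := congrArg Finset.card hsplit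
          rw [Finset.card_union_of_disjoint hdisj, hlow, hlowcard, hdegb] at hcards
          have hempty : (univ.filter fun a : Fin n => k ≤ (a : ℕ) ∧ E a b = true) = ∅ :=
            Finset.card_eq_zero.mp (by omega)
          by_contra hEab
          have hEt : E a b = true := by
            cases hE : E a b
            · exact absurd hE hEab
            · rfl
          have : a ∈ (univ.filter fun a : Fin n => k ≤ (a : ℕ) ∧ E a b = true) := by
            simp [ha, hEt]
          rw [hempty] at this
          simp at this
        by_cases hck : c < k
        · -- c below current row
          set cf : Fin n := ⟨c, hcn⟩ with hcfdef
          by_cases hEic : E ik cf = true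
          · -- extension step : row k adds at column c and removes at some d ≥ k
            have hsplitrow : (univ.filter fun b : Fin n => E ik b = true) =
                insert cf (univ.filter fun b : Fin n => k ≤ (b : ℕ) ∧ E ik b = true) := by
              ext b
              simp only [mem_filter, mem_univ, true_and, mem_insert]
              constructor
              · intro hb
                by_cases hbk : (b : ℕ) < k
                · left
                  by_contra hbc
                  have : (b : ℕ) ≠ c := by
                    intro hbceq; apply hbc; apply Fin.ext; simp [hcfdef, hbceq]
                  rw [claim1 b hbk this ik (le_refl _)] at hb
                  exact absurd hb (by simp)
                · exact Or.inr ⟨by omega, hb⟩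
              · rintro (rfl | ⟨_, hb⟩)
                · exact hEic
                · exact hb
            have hnotmem : cf ∉ (univ.filter fun b : Fin n => k ≤ (b : ℕ) ∧ E ik b = true) := by
              simp only [mem_filter, mem_univ, true_and, not_and]
              intro hkc
              have hcfv : (cf : ℕ) = c := rfl
              omega
            have hhighcard : (univ.filter fun b : Fin n => k ≤ (b : ℕ) ∧ E ik b = true).card
                = n - k - 1 := by
              have := congrArg Finset.card hsplitrow
              rw [Finset.card_insert_of_notMem hnotmem, hdegrow] at this
              omega
            have hsplithigh : (univ.filter fun b : Fin n => k ≤ (b : ℕ)) =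
                (univ.filter fun b : Fin n => k ≤ (b : ℕ) ∧ E ik b = true) ∪
                (univ.filter fun b : Fin n => k ≤ (b : ℕ) ∧ E ik b = false) := by
              ext b
              simp only [mem_filter, mem_univ, true_and, mem_union]
              constructor
              · intro hb
                cases hE : E ik b
                · exact Or.inr ⟨hb, rfl⟩
                · exact Or.inl ⟨hb, rfl⟩
              · rintro (⟨hb, _⟩ | ⟨hb, _⟩) <;> exact hb
            have hdisj2 : Disjoint
                (univ.filter fun b : Fin n => k ≤ (b : ℕ) ∧ E ik b = true)
                (univ.filter fun b : Fin n => k ≤ (b : ℕ) ∧ E ik b = false) := by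
              rw [Finset.disjoint_filter]
              rintro x _ ⟨_, hx⟩ ⟨_, hx'⟩
              rw [hx] at hx'; exact absurd hx' (by simp)
            have hGcard : (univ.filter fun b : Fin n => (k : ℕ) ≤ (b : ℕ)).card = n - k := by
              simpa [hikdef] using card_ge_filter ik
            have hFcard : (univ.filter fun b : Fin n => k ≤ (b : ℕ) ∧ E ik b = false).card
                = 1 := by
              have := congrArg Finset.card hsplithigh
              rw [Finset.card_union_of_disjoint hdisj2, hGcard, hhighcard] at this
              omega
            obtain ⟨df, hdf⟩ := Finset.card_eq_one.mp hFcard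
            have hdfmem : df ∈ (univ.filter fun b : Fin n => k ≤ (b : ℕ) ∧ E ik b = false) := by
              rw [hdf]; simp
            simp only [mem_filter, mem_univ, true_and] at hdfmem
            obtain ⟨hkdf, hEdf⟩ := hdfmem
            have hdfiff : ∀ b : Fin n, (k ≤ (b : ℕ) ∧ E ik b = false) ↔ b = df := by
              intro b
              constructor
              · intro hb
                have : b ∈ (univ.filter fun b : Fin n => k ≤ (b : ℕ) ∧ E ik b = false) := by
                  simp [hb.1, hb.2]
                rw [hdf] at this; simpa using this
              · rintro rfl; exact ⟨hkdf, hEdf⟩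
            -- new chain
            obtain ⟨tl, htl⟩ := G.head
            have hheadl : l.headI = c := by rw [htl]; rfl
            refine ⟨(df : ℕ), (df : ℕ) :: k :: l, by omega,
              mem_chF.mpr (Or.inr ⟨c, k, l, hck, hkdf, hl, rfl⟩), ?_, ?_⟩
            · intro t ht
              simp only [List.tail_cons, List.mem_cons] at ht
              rcases ht with rfl | htl'
              · omega
              · have htl2 : t = c ∨ t ∈ l.tail := by
                  rw [htl] at htl' ⊢
                  exact List.mem_cons.mp htl'
                rcases htl2 with rfl | htt
                · omega
                · have := htail _ htt; omega
            · have hcells2 : cells ((df : ℕ) :: k :: l) = (k, (df : ℕ)) :: (k, c) :: cells l := by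
                rw [cells_cons, hheadl]
              intro a ha b
              by_cases hak : (a : ℕ) < k
              · rw [hagr a hak b]
                simp only [EOf]
                congr 1
                apply decide_eq_decide.mpr
                have hmm : (((a : ℕ), (b : ℕ)) ∈ cells ((df : ℕ) :: k :: l)) ↔
                    (((a : ℕ), (b : ℕ)) ∈ cells l) := by
                  rw [hcells2]
                  simp only [List.mem_cons, Prod.mk.injEq]
                  constructor
                  · rintro (⟨h1, _⟩ | ⟨h1, _⟩ | h) <;> first | omega | exact h
                  · intro h; exact Or.inr (Or.inr h)
                exact hmm.symm
              · have hak' : (a : ℕ) = k := by omega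
                have haik : a = ik := by apply Fin.ext; simp [hikdef, hak']
                rw [← haik] at hEic hEdf hdfiff
                rw [EOf]
                have hmem2 : (((a : ℕ), (b : ℕ)) ∈ cells ((df : ℕ) :: k :: l)) ↔
                    ((b : ℕ) = (df : ℕ) ∨ (b : ℕ) = c) := by
                  rw [hcells2]
                  simp only [List.mem_cons, Prod.mk.injEq]
                  constructor
                  · rintro (⟨_, h2⟩ | ⟨_, h2⟩ | h)
                    · exact Or.inl h2
                    · exact Or.inr h2
                    · exfalso; have h5 := hrows _ h; simp at h5; omega
                  · rintro (h | h)
                    · exact Or.inl ⟨hak', h⟩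
                    · exact Or.inr (Or.inl ⟨hak', h⟩)
                by_cases hbc : (b : ℕ) = c
                · have hEb : E a b = true := by
                    have hbcf : b = cf := by apply Fin.ext; simp [hcfdef, hbc]
                    rw [hbcf]; exact hEic
                  rw [hEb]
                  have h1' : ¬((a : ℕ) ≤ (b : ℕ)) := by omega
                  have hmem3 : ((a : ℕ), (b : ℕ)) ∈ cells ((df : ℕ) :: k :: l) :=
                    hmem2.mpr (Or.inr hbc)
                  simp [h1', hmem3]
                · by_cases hbd : b = df
                  · have hbd2 : (b : ℕ) = (df : ℕ) := by rw [hbd]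
                    have hEb : E a b = false := by rw [hbd]; exact hEdf
                    rw [hEb]
                    have h1' : (a : ℕ) ≤ (b : ℕ) := by omega
                    have hmem3 : ((a : ℕ), (b : ℕ)) ∈ cells ((df : ℕ) :: k :: l) :=
                      hmem2.mpr (Or.inl hbd2)
                    simp [h1', hmem3]
                  · have hbd' : (b : ℕ) ≠ (df : ℕ) := fun h => hbd (Fin.ext h)
                    by_cases hbk : (b : ℕ) < k
                    · rw [claim1 b hbk hbc a (by omega)]
                      have h1' : ¬((a : ℕ) ≤ (b : ℕ)) := by omega
                      simp [hmem2, hbd', hbc, h1']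
                    · have hEt : E a b = true := by
                        cases hE : E a b
                        · exfalso
                          have : b = df := (hdfiff b).mp ⟨by omega, hE⟩
                          exact hbd this
                        · rfl
                      rw [hEt]
                      have h1' : (a : ℕ) ≤ (b : ℕ) := by omega
                      simp [hmem2, hbd', hbc, h1']
          · -- row k is clean (E ik cf = false)
            have hrowlow : ∀ b : Fin n, (b : ℕ) < k → E ik b = false := by
              intro b hb
              by_cases hbc : (b : ℕ) = c
              · have hbcf : b = cf := by apply Fin.ext; simp [hcfdef, hbc]
                rw [hbcf]
                cases hE : E ik cf
                · rfl
                · exact absurd hE hEic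
              · exact claim1 b hb hbc ik (le_refl _)
            refine ⟨c, l, hc, hl, fun t ht => by have := htail t ht; omega, ?_⟩
            intro a ha b
            by_cases hak : (a : ℕ) < k
            · exact hagr a hak b
            · have hak' : (a : ℕ) = k := by omega
              have haik : a = ik := by apply Fin.ext; simp [hikdef, hak']
              rw [← haik] at hrowlow hdegrow
              have hrowfull : (univ.filter fun b : Fin n => E a b = true) =
                  (univ.filter fun b : Fin n => k ≤ (b : ℕ)) := by
                refine Finset.eq_of_subset_of_card_le ?_ ?_
                · intro b hb
                  simp only [mem_filter, mem_univ, true_and] at hb ⊢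
                  by_contra hbk
                  rw [hrowlow b (by omega)] at hb
                  exact absurd hb (by simp)
                · have : (univ.filter fun b : Fin n => (k : ℕ) ≤ (b : ℕ)).card = n - k := by
                    simpa [hak'] using card_ge_filter a
                  rw [this, hdegrow]
              have hnoc : ∀ b : Fin n, (((a : ℕ), (b : ℕ)) ∈ cells l) → False := by
                intro b hmem
                have h5 := hrows _ hmem
                simp at h5
                omega
              rw [EOf]
              by_cases hbk : k ≤ (b : ℕ)
              · have : b ∈ (univ.filter fun b : Fin n => E a b = true) := by
                  rw [hrowfull]; simp [hbk]
                simp only [mem_filter, mem_univ, true_and] at this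
                rw [this]
                have h1' : (a : ℕ) ≤ (b : ℕ) := by omega
                have h2' : ¬(((a : ℕ), (b : ℕ)) ∈ cells l) := hnoc b
                simp [h1', h2']
              · rw [hrowlow b (by omega)]
                have h1' : ¬((a : ℕ) ≤ (b : ℕ)) := by omega
                have h2' : ¬(((a : ℕ), (b : ℕ)) ∈ cells l) := hnoc b
                simp [h1', h2']
        · -- c ≥ k : row k is clean
          have hrowlow : ∀ b : Fin n, (b : ℕ) < k → E ik b = false := by
            intro b hb
            exact claim1 b hb (by omega) ik (le_refl _)
          refine ⟨c, l, hc, hl, fun t ht => by have := htail t ht; omega, ?_⟩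
          intro a ha b
          by_cases hak : (a : ℕ) < k
          · exact hagr a hak b
          · have hak' : (a : ℕ) = k := by omega
            have haik : a = ik := by apply Fin.ext; simp [hikdef, hak']
            rw [← haik] at hrowlow hdegrow
            have hrowfull : (univ.filter fun b : Fin n => E a b = true) =
                (univ.filter fun b : Fin n => k ≤ (b : ℕ)) := by
              refine Finset.eq_of_subset_of_card_le ?_ ?_
              · intro b hb
                simp only [mem_filter, mem_univ, true_and] at hb ⊢
                by_contra hbk
                rw [hrowlow b (by omega)] at hb
                exact absurd hb (by simp)
              · have : (univ.filter fun b : Fin n => (k : ℕ) ≤ (b : ℕ)).card = n - k := by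
                  simpa [hak'] using card_ge_filter a
                rw [this, hdegrow]
            have hnoc : ∀ b : Fin n, (((a : ℕ), (b : ℕ)) ∈ cells l) → False := by
              intro b hmem
              have h5 := hrows _ hmem
              simp at h5
              omega
            rw [EOf]
            by_cases hbk : k ≤ (b : ℕ)
            · have : b ∈ (univ.filter fun b : Fin n => E a b = true) := by
                rw [hrowfull]; simp [hbk]
              simp only [mem_filter, mem_univ, true_and] at this
              rw [this]
              have h1' : (a : ℕ) ≤ (b : ℕ) := by omega
              have h2' : ¬(((a : ℕ), (b : ℕ)) ∈ cells l) := hnoc b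
              simp [h1', h2']
            · rw [hrowlow b (by omega)]
              have h1' : ¬((a : ℕ) ≤ (b : ℕ)) := by omega
              have h2' : ¬(((a : ℕ), (b : ℕ)) ∈ cells l) := hnoc b
              simp [h1', h2']
  obtain ⟨c, l, hc, hl, htail, hagr⟩ := hInv n hn (le_refl n)
  have hEeq : E = EOf n l := by
    funext a b
    exact hagr a a.isLt b
  have hcn : c < n := by omega
  have hceq : c = n - 1 := by
    by_contra hcne
    have hclt : c < n - 1 := by omega
    set cf : Fin n := ⟨c, hcn⟩ with hcfdef
    have hcfv : (cf : ℕ) = c := rfl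
    have h1' : degB E cf = (cf : ℕ) + 1 := by
      have := hB cf
      simp only [h1dB] at this
      rw [if_neg (by omega)] at this
      exact this
    have h2' : degB E cf = c := by
      rw [hEeq]
      have := degB_EOf hl hcn cf
      rw [if_pos hcfv] at this
      exact this
    omega
  subst hceq
  exact ⟨l, hl, hEeq⟩

/-! ### Counting chains -/

lemma fib_sum_odd (m : ℕ) : ∑ j ∈ Finset.range m, Nat.fib (2 * j + 1) = Nat.fib (2 * m) := by
  induction m with
  | zero => simp
  | succ k ih =>
    rw [Finset.sum_range_succ, ih, show 2 * (k + 1) = 2 * k + 2 from by ring,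
      Nat.fib_add_two]

lemma key_identity (m : ℕ) :
    1 + ∑ j ∈ Finset.range m, Nat.fib (2 * j + 1) * (m - j) = Nat.fib (2 * m + 1) := by
  induction m with
  | zero => simp
  | succ k ih =>
    have hsplit : ∑ j ∈ Finset.range (k + 1), Nat.fib (2 * j + 1) * (k + 1 - j)
        = (∑ j ∈ Finset.range k, Nat.fib (2 * j + 1) * (k - j)) +
          ∑ j ∈ Finset.range (k + 1), Nat.fib (2 * j + 1) := by
      rw [Finset.sum_range_succ (f := fun j => Nat.fib (2 * j + 1) * (k + 1 - j))]
      rw [Finset.sum_range_succ (f := fun j => Nat.fib (2 * j + 1))]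
      have hc : ∀ j ∈ Finset.range k,
          Nat.fib (2 * j + 1) * (k + 1 - j) = Nat.fib (2 * j + 1) * (k - j) + Nat.fib (2 * j + 1) := by
        intro j hj
        have hjk : j < k := Finset.mem_range.mp hj
        have h1 : k + 1 - j = (k - j) + 1 := by omega
        rw [h1, Nat.mul_succ]
      rw [Finset.sum_congr rfl hc, Finset.sum_add_distrib]
      simp [Nat.sub_self]
      ring
    rw [hsplit, fib_sum_odd]
    have h2 : 2 * (k + 1) + 1 = (2 * k + 1) + 2 := by ring
    have h3 : 2 * (k + 1) = (2 * k + 1) + 1 := by ring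
    rw [h2, Nat.fib_add_two, h3]
    omega

lemma card_chF : ∀ m, (chF m).card = Nat.fib (2 * m + 1) := by
  intro m
  induction m using Nat.strong_induction_on with
  | _ m IH =>
    rw [chF]
    have hnot : [m] ∉ ((Finset.range m).attach.biUnion fun j =>
        (chF j.1).biUnion fun l => (Finset.Icc (j.1 + 1) m).image fun i => m :: i :: l) := by
      simp only [Finset.mem_biUnion, Finset.mem_image, Finset.mem_attach, true_and,
        Subtype.exists, Finset.mem_range, Finset.mem_Icc]
      rintro ⟨j, hj, l, hl, i, hi, heq⟩
      simp at heq
    rw [Finset.card_insert_of_notMem hnot]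
    have houter : ∀ x ∈ (Finset.range m).attach, ∀ y ∈ (Finset.range m).attach, x ≠ y →
        Disjoint ((chF x.1).biUnion fun l => (Finset.Icc (x.1 + 1) m).image fun i => m :: i :: l)
          ((chF y.1).biUnion fun l => (Finset.Icc (y.1 + 1) m).image fun i => m :: i :: l) := by
      intro x _ y _ hxy
      rw [Finset.disjoint_left]
      intro a ha ha'
      simp only [Finset.mem_biUnion, Finset.mem_image] at ha ha'
      obtain ⟨l₁, hl₁, i₁, _, heq₁⟩ := ha
      obtain ⟨l₂, hl₂, i₂, _, heq₂⟩ := ha'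
      obtain ⟨t₁, ht₁⟩ := (good_of_chF _ _ hl₁).head
      obtain ⟨t₂, ht₂⟩ := (good_of_chF _ _ hl₂).head
      rw [← heq₂] at heq₁
      simp only [List.cons.injEq] at heq₁
      apply hxy
      apply Subtype.ext
      have : l₁ = l₂ := heq₁.2.2
      rw [this, ht₂] at ht₁
      exact ((List.cons.injEq _ _ _ _).mp ht₁ |>.1).symm
    rw [Finset.card_biUnion houter]
    have hinner : ∀ j : {x // x ∈ Finset.range m},
        ((chF j.1).biUnion fun l => (Finset.Icc (j.1 + 1) m).image fun i => m :: i :: l).card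
          = (chF j.1).card * (m - j.1) := by
      intro j
      have hdisj : ∀ x ∈ chF j.1, ∀ y ∈ chF j.1, x ≠ y →
          Disjoint ((Finset.Icc (j.1 + 1) m).image fun i => m :: i :: x)
            ((Finset.Icc (j.1 + 1) m).image fun i => m :: i :: y) := by
        intro x _ y _ hxy
        rw [Finset.disjoint_left]
        intro a ha ha'
        simp only [Finset.mem_image] at ha ha'
        obtain ⟨i₁, _, heq₁⟩ := ha
        obtain ⟨i₂, _, heq₂⟩ := ha'
        rw [← heq₂] at heq₁
        simp only [List.cons.injEq] at heq₁
        exact hxy heq₁.2.2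
      rw [Finset.card_biUnion hdisj]
      have himg : ∀ l : List ℕ,
          ((Finset.Icc (j.1 + 1) m).image fun i => m :: i :: l).card = m - j.1 := by
        intro l
        rw [Finset.card_image_of_injective _ (fun i₁ i₂ h => by
          simpa using (List.cons.injEq _ _ _ _).mp h |>.2 |> fun h' => ((List.cons.injEq _ _ _ _).mp h').1)]
        rw [Nat.card_Icc]
        omega
      rw [Finset.sum_congr rfl (fun l _ => himg l), Finset.sum_const, smul_eq_mul]
    rw [Finset.sum_congr rfl (fun j _ => hinner j)]
    rw [Finset.sum_attach (Finset.range m) (fun j => (chF j).card * (m - j))]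
    have hIH : ∀ j ∈ Finset.range m, (chF j).card * (m - j) = Nat.fib (2 * j + 1) * (m - j) := by
      intro j hj
      rw [IH j (Finset.mem_range.mp hj)]
    rw [Finset.sum_congr rfl hIH]
    rw [add_comm]
    exact key_identity m

lemma count_h1 {n : ℕ} (hn : 1 ≤ n) :
    countReal n (h1dA n) (h1dB n) = Nat.fib (2 * n - 1) := by
  have hmn : n - 1 < n := by omega
  have hset : {E : Fin n → Fin n → Bool |
      (∀ i, degA E i = h1dA n i) ∧ (∀ j, degB E j = h1dB n j)}
      = ↑((chF (n - 1)).image (EOf n)) := by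
    ext E
    simp only [Set.mem_setOf_eq, Finset.coe_image, Set.mem_image, Finset.mem_coe]
    constructor
    · rintro ⟨hA, hB⟩
      obtain ⟨l, hl, hE⟩ := surj hn E hA hB
      exact ⟨l, hl, hE.symm⟩
    · rintro ⟨l, hl, rfl⟩
      constructor
      · intro i; rw [degA_EOf hl hmn i]; rfl
      · intro j; rw [degB_EOf hl hmn j]; rfl
  rw [countReal, hset, Set.ncard_coe_finset, Finset.card_image_of_injOn
    (fun l₁ h₁ l₂ h₂ h => EOf_inj h₁ h₂ hmn hmn h), card_chF]
  congr 1
  omega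

end NPS

theorem stmt_15 :
    (∀ n : ℕ, countReal n (h0dA n) (h0dB n) = 1) ∧
    (∃ c C : ℝ, 0 < c ∧ c ≤ C ∧ ∀ n : ℕ, 1 ≤ n →
      c * ((1 + Real.sqrt 5) / 2) ^ (2 * n) ≤
        (countReal n (h1dA n) (h1dB n) : ℝ) ∧
      (countReal n (h1dA n) (h1dB n) : ℝ) ≤
        C * ((1 + Real.sqrt 5) / 2) ^ (2 * n)) ∧
    ¬ ∃ C m : ℕ, ∀ n : ℕ, 1 ≤ n →
      countReal n (h1dA n) (h1dB n) ≤
        C * n ^ m * countReal n (h0dA n) (h0dB n) := by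
  have h5sq : Real.sqrt 5 ^ 2 = 5 := Real.sq_sqrt (by norm_num)
  have h5nn : (0 : ℝ) ≤ Real.sqrt 5 := Real.sqrt_nonneg 5
  have h5lb : (2 : ℝ) ≤ Real.sqrt 5 := by nlinarith
  have h5ub : Real.sqrt 5 ≤ 3 := by nlinarith
  set φ : ℝ := (1 + Real.sqrt 5) / 2 with hφdef
  have hφ1 : (3 / 2 : ℝ) ≤ φ := by rw [hφdef]; linarith
  have hφ2 : φ ≤ 2 := by rw [hφdef]; linarith
  have hφsq : φ ^ 2 = φ + 1 := by rw [hφdef]; nlinarith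
  have hφpos : (0 : ℝ) < φ := by linarith
  have hfib : ∀ k, ((Nat.fib (k + 1) : ℝ) ≤ φ ^ k ∧ φ ^ k ≤ (Nat.fib (k + 2) : ℝ)) := by
    intro k
    induction k using Nat.strong_induction_on with
    | _ k IH =>
      rcases k with _ | _ | k
      · refine ⟨by simp, by simp [Nat.fib]⟩
      · refine ⟨?_, ?_⟩
        · rw [show Nat.fib 2 = 1 from by decide]
          push_cast
          simpa using by linarith
        · rw [show Nat.fib 3 = 2 from by decide]
          push_cast
          simpa using by linarith
      · obtain ⟨h1, h2⟩ := IH k (by omega)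
        obtain ⟨h1', h2'⟩ := IH (k + 1) (by omega)
        have hpow : φ ^ (k + 2) = φ ^ k + φ ^ (k + 1) := by
          rw [pow_add, hφsq]; ring
        constructor
        · have hf : (Nat.fib (k + 3) : ℝ) = (Nat.fib (k + 1) : ℝ) + (Nat.fib (k + 2) : ℝ) := by
            rw [show k + 3 = (k + 1) + 2 from rfl, Nat.fib_add_two]; push_cast; ring
          rw [hf, hpow]
          exact add_le_add h1 h1'
        · have hf : (Nat.fib (k + 4) : ℝ) = (Nat.fib (k + 2) : ℝ) + (Nat.fib (k + 3) : ℝ) := by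
            rw [show k + 4 = (k + 2) + 2 from rfl, Nat.fib_add_two]; push_cast; ring
          rw [hf, hpow]
          exact add_le_add h2 h2'
  have hbound : ∀ n : ℕ, 1 ≤ n →
      (1 / 8 : ℝ) * φ ^ (2 * n) ≤ (countReal n (h1dA n) (h1dB n) : ℝ) ∧
      (countReal n (h1dA n) (h1dB n) : ℝ) ≤ 1 * φ ^ (2 * n) := by
    intro n hn
    rw [NPS.count_h1 hn]
    constructor
    · rcases Nat.eq_or_lt_of_le hn with h1 | h2
      · rw [← h1]
        rw [show Nat.fib (2 * 1 - 1) = 1 from by decide]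
        push_cast
        norm_num
        nlinarith [hφsq, hφ2, hφpos]
      · have h3 : 2 * n - 1 = (2 * n - 3) + 2 := by omega
        have hsplit : φ ^ (2 * n) = φ ^ (2 * n - 3) * φ ^ 3 := by
          rw [← pow_add]; congr 1; omega
        have h8 : φ ^ 3 ≤ 8 := by nlinarith
        have hnn : (0 : ℝ) ≤ φ ^ (2 * n - 3) := le_of_lt (pow_pos hφpos _)
        calc (1 / 8 : ℝ) * φ ^ (2 * n) = (1 / 8) * (φ ^ (2 * n - 3) * φ ^ 3) := by
              rw [hsplit]
          _ ≤ (1 / 8) * (φ ^ (2 * n - 3) * 8) := by nlinarith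
          _ = φ ^ (2 * n - 3) := by ring
          _ ≤ (Nat.fib (2 * n - 1) : ℝ) := by rw [h3]; exact (hfib (2 * n - 3)).2
    · have h4 : 2 * n - 1 = (2 * n - 2) + 1 := by omega
      have h5 : (Nat.fib (2 * n - 1) : ℝ) ≤ φ ^ (2 * n - 2) := by
        rw [h4]; exact (hfib (2 * n - 2)).1
      have h6 : φ ^ (2 * n - 2) ≤ φ ^ (2 * n) :=
        pow_le_pow_right₀ (by linarith) (by omega)
      linarith
  refine ⟨NPS.part1, ⟨1 / 8, 1, by norm_num, by norm_num, fun n hn => ?_⟩, ?_⟩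
  · exact hbound n hn
  · rintro ⟨C, m, hCm⟩
    have hC1 : 1 ≤ C := by
      by_contra hC0
      have hC : C = 0 := by omega
      subst hC
      have := hCm 1 le_rfl
      rw [NPS.count_h1 le_rfl, NPS.part1 1] at this
      rw [show Nat.fib (2 * 1 - 1) = 1 from by decide] at this
      omega
    have hkey : ∀ n : ℕ, 1 ≤ n → (1 / 8 : ℝ) * 2 ^ n ≤ (C : ℝ) * (n : ℝ) ^ m := by
      intro n hn
      have hlo := (hbound n hn).1
      have hup : (countReal n (h1dA n) (h1dB n) : ℝ) ≤ (C : ℝ) * (n : ℝ) ^ m := by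
        have h := hCm n hn
        rw [NPS.part1 n, mul_one] at h
        exact_mod_cast h
      have h2phi : (2 : ℝ) ^ n ≤ φ ^ (2 * n) := by
        rw [pow_mul]
        apply pow_le_pow_left₀ (by norm_num)
        rw [hφsq]; linarith
      linarith
    obtain ⟨n, hn1, hnlt⟩ : ∃ n : ℕ, 1 ≤ n ∧ ((n : ℝ) ^ m / 2 ^ n) < 1 / (8 * ((C : ℝ) + 1)) := by
      have htend := tendsto_pow_const_div_const_pow_of_one_lt m (by norm_num : (1 : ℝ) < 2)
      have hev := htend.eventually (gt_mem_nhds (by positivity : (0 : ℝ) < 1 / (8 * ((C : ℝ) + 1))))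
      obtain ⟨n, hn⟩ := (hev.and (Filter.eventually_ge_atTop 1)).exists
      exact ⟨n, hn.2, hn.1⟩
    have h2pos : (0 : ℝ) < 2 ^ n := by positivity
    have hn1' : (1 : ℝ) ≤ (n : ℝ) := by exact_mod_cast hn1
    have hnm1 : (1 : ℝ) ≤ (n : ℝ) ^ m := by
      simpa using pow_le_pow_left₀ (by norm_num : (0:ℝ) ≤ 1) hn1' m
    have hineq := hkey n hn1
    have hCr : (1 : ℝ) ≤ (C : ℝ) := by exact_mod_cast hC1
    have hCpos : (0 : ℝ) < 8 * ((C : ℝ) + 1) := by linarith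
    rw [div_lt_div_iff₀ h2pos hCpos] at hnlt
    nlinarith [hnlt, hineq, hnm1, h2pos, hCr]
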